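/- arXiv:0804.1603 — 6 statements merged into one kernel-verified Lean document; each statement's English description precedes it below -/
import Mathlib

section
/- For any permutation π of E = {1,...,n} and any subset A ⊆ E, the vector x^π defined by x^π_{π_k} = f({π_1,...,π_k}) - f({π_1,...,π_{k-1}}) satisfies ∑_{i∈A} x^π_i ≤ f(A), where f is a normalized increasing submodular function. That is, x^π lies in the polymatroid P(f) = {x ≥ 0 : x(A) ≤ f(A) for all A ⊆ E}. -/
open Finset

def Submodular {n : ℕ} (f : Finset (Fin n) → ℝ) : Prop :=
  ∀ A B : Finset (Fin n), f (A ∪ B) + f (A ∩ B) ≤ f A + f B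

/-- The greedy vector `x^π`: `x^π_{π_k} = f({π_1,…,π_k}) − f({π_1,…,π_{k−1}})`. -/
def greedyVec {n : ℕ} (f : Finset (Fin n) → ℝ) (π : Equiv.Perm (Fin n)) (i : Fin n) : ℝ :=
  f (insert i ((Finset.Iio (π.symm i)).image π)) - f ((Finset.Iio (π.symm i)).image π)

theorem greedyVec_mem_polymatroid {n : ℕ} (f : Finset (Fin n) → ℝ)
    (hnorm : f ∅ = 0)
    (hmono : ∀ A B : Finset (Fin n), A ⊆ B → f A ≤ f B)
    (hsub : Submodular f)
    (hnn : ∀ A : Finset (Fin n), 0 ≤ f A)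
    (π : Equiv.Perm (Fin n)) :
    (∀ i : Fin n, 0 ≤ greedyVec f π i) ∧
      ∀ A : Finset (Fin n), ∑ i ∈ A, greedyVec f π i ≤ f A := by
  constructor
  · intro i
    have := hmono _ _ (Finset.subset_insert i ((Finset.Iio (π.symm i)).image π))
    simp only [greedyVec]
    linarith
  · intro A
    induction A using Finset.strongInduction with
    | _ A ih =>
      rcases A.eq_empty_or_nonempty with rfl | hA
      · simp [hnorm]
      · obtain ⟨i, hi, hmax⟩ := A.exists_max_image (fun j => π.symm j) hA
        set S : Finset (Fin n) := (Finset.Iio (π.symm i)).image π with hS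
        have hiS : i ∉ S := by
          intro h
          obtain ⟨k, hk, hki⟩ := Finset.mem_image.1 h
          rw [Finset.mem_Iio] at hk
          have : π.symm i = k := by rw [← hki]; simp
          omega
        have hsubS : A.erase i ⊆ S := by
          intro j hj
          obtain ⟨hne, hjA⟩ := Finset.mem_erase.1 hj
          have hlt : π.symm j < π.symm i := by
            refine lt_of_le_of_ne (hmax j hjA) ?_
            intro h
            exact hne (by simpa using congrArg π h)
          exact Finset.mem_image.2 ⟨π.symm j, Finset.mem_Iio.2 hlt, by simp⟩
        have hAS_union : A ∪ S = insert i S := by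
          ext x
          simp only [Finset.mem_union, Finset.mem_insert]
          constructor
          · rintro (hx | hx)
            · by_cases h : x = i
              · exact Or.inl h
              · exact Or.inr (hsubS (Finset.mem_erase.2 ⟨h, hx⟩))
            · exact Or.inr hx
          · rintro (rfl | hx)
            · exact Or.inl hi
            · exact Or.inr hx
        have hAS_inter : A ∩ S = A.erase i := by
          ext x
          simp only [Finset.mem_inter, Finset.mem_erase]
          constructor
          · rintro ⟨hxA, hxS⟩
            exact ⟨fun h => hiS (h ▸ hxS), hxA⟩
          · rintro ⟨hne, hxA⟩
            exact ⟨hxA, hsubS (Finset.mem_erase.2 ⟨hne, hxA⟩)⟩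
        have hkey : greedyVec f π i ≤ f A - f (A.erase i) := by
          have := hsub A S
          rw [hAS_union, hAS_inter] at this
          simp only [greedyVec, ← hS]
          linarith
        have hih : ∑ j ∈ A.erase i, greedyVec f π j ≤ f (A.erase i) :=
          ih _ (Finset.erase_ssubset hi)
        have hsum := Finset.sum_erase_add A (greedyVec f π) hi
        linarith
end

section
/- Suppose the polytope P(f) = {x ≥ 0 : x(A) ≤ f(A) for all A ⊆ E} contains x^π for every permutation π of E, where x^π is the greedy vector of partial differences of f along π. Then f is submodular, i.e., f(A) + f(B) ≥ f(A∪B) + f(A∩B) for all A, B ⊆ E. -/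
open Finset

lemma image_Iio_eq {n : ℕ} (π : Equiv.Perm (Fin n)) (k : Fin n) :
    (Finset.Iio k).image π = Finset.univ.filter (fun i => ((π.symm i : Fin n) : ℕ) < (k : ℕ)) := by
  ext i
  simp only [Finset.mem_image, Finset.mem_filter, Finset.mem_Iio, Finset.mem_univ, true_and,
    Fin.lt_def]
  constructor
  · rintro ⟨j, hj, rfl⟩; simpa using hj
  · intro h; exact ⟨π.symm i, h, by simp⟩

lemma prefix_sum {n : ℕ} (f : Finset (Fin n) → ℝ) (hnorm : f ∅ = 0)
    (π : Equiv.Perm (Fin n)) (m : ℕ) :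
    ∑ i ∈ Finset.univ.filter (fun i : Fin n => ((π.symm i : Fin n) : ℕ) < m), greedyVec f π i
      = f (Finset.univ.filter (fun i : Fin n => ((π.symm i : Fin n) : ℕ) < m)) := by
  induction m with
  | zero => simp [hnorm]
  | succ m ih =>
    by_cases h : m < n
    · have e : Fin n := π ⟨m, h⟩
      have hset : Finset.univ.filter (fun i : Fin n => ((π.symm i : Fin n) : ℕ) < m + 1)
          = insert (π ⟨m, h⟩) (Finset.univ.filter (fun i : Fin n => ((π.symm i : Fin n) : ℕ) < m)) := by
        ext i
        simp only [Finset.mem_filter, Finset.mem_univ, true_and, Finset.mem_insert]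
        constructor
        · intro hi
          rcases Nat.lt_succ_iff_lt_or_eq.mp hi with h' | h'
          · exact Or.inr h'
          · left
            have : π.symm i = ⟨m, h⟩ := Fin.ext h'
            rw [← this]; simp
        · rintro (rfl | hi)
          · simp [Nat.lt_succ_iff]
          · exact Nat.lt_succ_of_lt hi
      have hnot : π ⟨m, h⟩ ∉ Finset.univ.filter (fun i : Fin n => ((π.symm i : Fin n) : ℕ) < m) := by
        simp
      rw [hset, Finset.sum_insert hnot, ih]
      have hgv : greedyVec f π (π ⟨m, h⟩)
          = f (insert (π ⟨m, h⟩) (Finset.univ.filter (fun i : Fin n => ((π.symm i : Fin n) : ℕ) < m)))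
            - f (Finset.univ.filter (fun i : Fin n => ((π.symm i : Fin n) : ℕ) < m)) := by
        unfold greedyVec
        rw [show π.symm (π ⟨m, h⟩) = ⟨m, h⟩ by simp, image_Iio_eq]
      rw [hgv]; ring
    · have : Finset.univ.filter (fun i : Fin n => ((π.symm i : Fin n) : ℕ) < m + 1)
          = Finset.univ.filter (fun i : Fin n => ((π.symm i : Fin n) : ℕ) < m) := by
        apply Finset.filter_congr
        intro i _
        have := (π.symm i).isLt
        omega
      rw [this]; exact ih


theorem submodular_of_greedy_in_polytope {n : ℕ} (f : Finset (Fin n) → ℝ)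
    (hnorm : f ∅ = 0)
    (hmono : ∀ A B : Finset (Fin n), A ⊆ B → f A ≤ f B)
    (hnn : ∀ A : Finset (Fin n), 0 ≤ f A)
    (hgreedy : ∀ π : Equiv.Perm (Fin n),
      (∀ i : Fin n, 0 ≤ greedyVec f π i) ∧
        ∀ A : Finset (Fin n), ∑ i ∈ A, greedyVec f π i ≤ f A) :
    Submodular f := by
  intro A B
  classical
  set s1 : List (Fin n) := (A ∩ B).sort (· ≤ ·) with hs1
  set s2 : List (Fin n) := (A \ B).sort (· ≤ ·) with hs2
  set s3 : List (Fin n) := (B \ A).sort (· ≤ ·) with hs3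
  set s4 : List (Fin n) := ((A ∪ B)ᶜ).sort (· ≤ ·) with hs4
  set l : List (Fin n) := s1 ++ (s2 ++ (s3 ++ s4)) with hl
  have hmem : ∀ i : Fin n, (i ∈ s1 ↔ i ∈ A ∩ B) ∧ (i ∈ s2 ↔ i ∈ A \ B)
      ∧ (i ∈ s3 ↔ i ∈ B \ A) ∧ (i ∈ s4 ↔ i ∈ (A ∪ B)ᶜ) := by
    intro i
    refine ⟨Finset.mem_sort _, Finset.mem_sort _, Finset.mem_sort _, Finset.mem_sort _⟩
  have hnd : l.Nodup := by
    rw [hl, List.nodup_append, List.nodup_append, List.nodup_append]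
    refine ⟨Finset.sort_nodup _ _, ⟨Finset.sort_nodup _ _,
      ⟨Finset.sort_nodup _ _, Finset.sort_nodup _ _, ?_⟩, ?_⟩, ?_⟩
    · intro a ha b hb hab; rw [← hab] at hb
      rcases hmem a with ⟨h1, h2, h3, h4⟩
      have := h3.mp ha; have := h4.mp hb
      simp only [Finset.mem_sdiff, Finset.mem_compl, Finset.mem_union] at *
      tauto
    · intro a ha b hb hab; rw [← hab] at hb
      rcases hmem a with ⟨h1, h2, h3, h4⟩
      have := h2.mp ha
      rcases List.mem_append.mp hb with hb | hb
      · have := h3.mp hb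
        simp only [Finset.mem_sdiff] at *; tauto
      · have := h4.mp hb
        simp only [Finset.mem_sdiff, Finset.mem_compl, Finset.mem_union] at *; tauto
    · intro a ha b hb hab; rw [← hab] at hb
      rcases hmem a with ⟨h1, h2, h3, h4⟩
      have := h1.mp ha
      rcases List.mem_append.mp hb with hb | hb
      · have := h2.mp hb
        simp only [Finset.mem_sdiff, Finset.mem_inter] at *; tauto
      rcases List.mem_append.mp hb with hb | hb
      · have := h3.mp hb
        simp only [Finset.mem_sdiff, Finset.mem_inter] at *; tauto
      · have := h4.mp hb
        simp only [Finset.mem_inter, Finset.mem_compl, Finset.mem_union] at *; tauto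
  have hcardU : (A ∩ B).card + (A \ B).card + (B \ A).card = (A ∪ B).card := by
    have h1 := Finset.card_inter_add_card_sdiff A B
    have h2 := Finset.card_sdiff_add_card B A
    rw [Finset.union_comm B A] at h2
    omega
  have hlen : l.length = n := by
    have hUle : (A ∪ B).card ≤ n := by
      simpa using Finset.card_le_card (Finset.subset_univ (A ∪ B))
    have hc : ((A ∪ B)ᶜ).card = n - (A ∪ B).card := by
      rw [Finset.card_compl, Fintype.card_fin]
    simp only [hl, List.length_append, hs1, hs2, hs3, hs4, Finset.length_sort]
    omega
  have hinj : Function.Injective (fun k : Fin n => l.get (Fin.cast hlen.symm k)) := by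
    intro a b hab
    have := (List.Nodup.get_inj_iff hnd).mp hab
    exact Fin.ext (by simpa using congrArg Fin.val this)
  set π : Equiv.Perm (Fin n) :=
    Equiv.ofBijective _ (Finite.injective_iff_bijective.mp hinj) with hπdef
  have hπ : ∀ k : Fin n, π k = l.get (Fin.cast hlen.symm k) := fun k => rfl
  have key : ∀ m : ℕ,
      Finset.univ.filter (fun i : Fin n => ((π.symm i : Fin n) : ℕ) < m)
        = (l.take m).toFinset := by
    intro m
    ext i
    simp only [Finset.mem_filter, Finset.mem_univ, true_and, List.mem_toFinset,
      List.mem_take_iff_getElem]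
    constructor
    · intro h
      refine ⟨((π.symm i : Fin n) : ℕ), lt_min h (by rw [hlen]; exact (π.symm i).isLt), ?_⟩
      have h2 : π (π.symm i) = i := π.apply_symm_apply i
      rw [hπ] at h2
      simpa [List.get_eq_getElem] using h2
    · rintro ⟨j, hj, rfl⟩
      have hjn : j < n := by
        have := min_le_right m l.length
        omega
      have h2 : π ⟨j, hjn⟩ = l[j] := by
        rw [hπ]; simp [List.get_eq_getElem]
      have h3 : π.symm l[j] = ⟨j, hjn⟩ := by rw [← h2, Equiv.symm_apply_apply]
      rw [h3]
      exact lt_of_lt_of_le hj (min_le_left _ _)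
  have t1 : (l.take (A ∩ B).card).toFinset = A ∩ B := by
    have : l.take (A ∩ B).card = s1 :=
      List.take_left' (by simp [hs1, Finset.length_sort])
    rw [this, hs1, Finset.sort_toFinset]
  have t2 : (l.take A.card).toFinset = A := by
    have hc : A.card = s1.length + s2.length := by
      simp only [hs1, hs2, Finset.length_sort]
      exact (Finset.card_inter_add_card_sdiff A B).symm
    have : l.take A.card = s1 ++ s2 := by
      rw [hc, hl, List.take_length_add_append, List.take_left' rfl]
    rw [this, List.toFinset_append, hs1, hs2, Finset.sort_toFinset, Finset.sort_toFinset]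
    ext x
    simp only [Finset.mem_union, Finset.mem_inter, Finset.mem_sdiff]
    tauto
  have t3 : (l.take (A ∪ B).card).toFinset = A ∪ B := by
    have hc : (A ∪ B).card = s1.length + (s2.length + s3.length) := by
      simp only [hs1, hs2, hs3, Finset.length_sort]
      omega
    have : l.take (A ∪ B).card = s1 ++ (s2 ++ s3) := by
      rw [hc, hl, List.take_length_add_append, List.take_length_add_append, List.take_left' rfl]
    rw [this, List.toFinset_append, List.toFinset_append, hs1, hs2, hs3,
      Finset.sort_toFinset, Finset.sort_toFinset, Finset.sort_toFinset]
    ext x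
    simp only [Finset.mem_union, Finset.mem_inter, Finset.mem_sdiff]
    tauto
  have hAB : ∑ i ∈ A ∩ B, greedyVec f π i = f (A ∩ B) := by
    have h := prefix_sum f hnorm π (A ∩ B).card
    rwa [key, t1] at h
  have hA : ∑ i ∈ A, greedyVec f π i = f A := by
    have h := prefix_sum f hnorm π A.card
    rwa [key, t2] at h
  have hU : ∑ i ∈ A ∪ B, greedyVec f π i = f (A ∪ B) := by
    have h := prefix_sum f hnorm π (A ∪ B).card
    rwa [key, t3] at h
  have hB : ∑ i ∈ B, greedyVec f π i ≤ f B := (hgreedy π).2 B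
  have d1 : ∑ i ∈ A ∪ B, greedyVec f π i
      = ∑ i ∈ B, greedyVec f π i + ∑ i ∈ A \ B, greedyVec f π i := by
    rw [← Finset.sum_union Finset.sdiff_disjoint.symm]
    congr 1
    ext x
    simp only [Finset.mem_union, Finset.mem_sdiff]
    tauto
  have d2 : ∑ i ∈ A, greedyVec f π i
      = ∑ i ∈ A ∩ B, greedyVec f π i + ∑ i ∈ A \ B, greedyVec f π i := by
    rw [← Finset.sum_union (Finset.sdiff_disjoint.symm.mono_left Finset.inter_subset_right)]
    congr 1
    ext x
    simp only [Finset.mem_union, Finset.mem_inter, Finset.mem_sdiff]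
    tauto
  linarith
end

section
/- Let f : 2^E → ℝ≥0 be normalized, increasing and submodular, and let c : E → ℝ with c_{π_1} ≥ c_{π_2} ≥ ... ≥ c_{π_n} for some permutation π. Then the greedy vector x^π (defined by x^π_{π_k} = f({π_1,...,π_k}) - f({π_1,...,π_{k-1}})) maximizes ∑_{i∈E} c_i x_i over all x in the polymatroid P(f) = {x ≥ 0 : x(A) ≤ f(A), ∀ A ⊆ E}. -/
open Finset

private lemma tele (g : ℕ → ℝ) : ∀ a b : ℕ, a ≤ b →
    ∑ m ∈ Finset.Ico a b, (g m - g (m+1)) = g a - g b := by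
  intro a b
  induction b with
  | zero => intro h; interval_cases a; simp
  | succ b ih =>
    intro h
    rcases Nat.lt_or_ge a (b+1) with h' | h'
    · have hab : a ≤ b := by omega
      rw [Finset.sum_Ico_succ_top hab, ih hab]; ring
    · have : a = b + 1 := by omega
      subst this; simp

theorem greedy_maximizes_lp {n : ℕ} (f : Finset (Fin n) → ℝ)
    (hnorm : f ∅ = 0)
    (hmono : ∀ A B : Finset (Fin n), A ⊆ B → f A ≤ f B)
    (hsub : Submodular f)
    (hnn : ∀ A : Finset (Fin n), 0 ≤ f A)
    (c : Fin n → ℝ) (hc : ∀ i, 0 ≤ c i)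
    (π : Equiv.Perm (Fin n))
    (hsorted : ∀ k l : Fin n, k ≤ l → c (π l) ≤ c (π k)) :
    ∀ x : Fin n → ℝ, (∀ i, 0 ≤ x i) → (∀ A : Finset (Fin n), ∑ i ∈ A, x i ≤ f A) →
      ∑ i, c i * x i ≤ ∑ i, c i * greedyVec f π i := by
  intro x hx hxf
  classical
  set C : ℕ → ℝ := fun l => if h : l < n then c (π ⟨l, h⟩) else 0 with hC
  set d : Fin n → ℝ := fun l => C l.val - C (l.val + 1) with hd
  have hCval : ∀ l : Fin n, C l.val = c (π l) := by
    intro l; simp [hC, l.isLt]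
  have hdnn : ∀ l : Fin n, 0 ≤ d l := by
    intro l
    simp only [hd, hC]
    rcases Nat.lt_or_ge (l.val + 1) n with h | h
    · simp only [l.isLt, h, dif_pos]
      have : c (π ⟨l.val + 1, h⟩) ≤ c (π ⟨l.val, l.isLt⟩) := by
        apply hsorted
        simp [Fin.le_def]
      linarith
    · simp only [l.isLt, dif_pos, Nat.not_lt.mpr h, dif_neg, not_lt_of_ge h]
      simpa using hc (π ⟨l.val, l.isLt⟩)
  have htel : ∀ k : Fin n, ∑ l ∈ Finset.Ici k, d l = c (π k) := by
    intro k
    have hbij : ∑ l ∈ Finset.Ici k, d l = ∑ m ∈ Finset.Ico k.val n, (C m - C (m + 1)) := by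
      refine Finset.sum_nbij' (i := fun (l : Fin n) => l.val)
        (j := fun m => if h : m < n then (⟨m, h⟩ : Fin n) else k) ?_ ?_ ?_ ?_ ?_
      · intro a ha; simp only [Finset.mem_Ici] at ha
        simp [a.isLt, Fin.le_def.mp ha]
      · intro a ha; simp only [Finset.mem_Ico] at ha
        simp [ha.2, Fin.le_def, ha.1]
      · intro a ha; simp [a.isLt]
      · intro a ha; simp only [Finset.mem_Ico] at ha; simp [ha.2]
      · intro a ha; simp [hd]
    rw [hbij, tele C k.val n (le_of_lt k.isLt)]
    have : C n = 0 := by simp [hC]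
    rw [this, hCval k, sub_zero]
  -- greedy vector applied along π
  have hgk : ∀ k : Fin n, greedyVec f π (π k)
      = f ((Finset.Iic k).image π) - f ((Finset.Iio k).image π) := by
    intro k
    have h1 : π.symm (π k) = k := Equiv.symm_apply_apply π k
    have h2 : insert (π k) ((Finset.Iio k).image π) = (Finset.Iic k).image π := by
      rw [← Finset.Iio_insert, Finset.image_insert]
    rw [greedyVec, h1, h2]
  have hIio0 : ∀ (h : 0 < n), Finset.Iio (⟨0, h⟩ : Fin n) = ∅ := by
    intro h; ext a; simp [Fin.lt_def]
  have hIioSucc : ∀ (m : ℕ) (h : m + 1 < n),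
      Finset.Iio (⟨m + 1, h⟩ : Fin n) = Finset.Iic (⟨m, by omega⟩ : Fin n) := by
    intro m h; ext a; simp [Fin.lt_def, Fin.le_def]
  have hgre : ∀ (m : ℕ) (h : m < n),
      ∑ k ∈ Finset.Iic (⟨m, h⟩ : Fin n), greedyVec f π (π k)
        = f ((Finset.Iic (⟨m, h⟩ : Fin n)).image π) := by
    intro m
    induction m with
    | zero =>
      intro h
      have : Finset.Iic (⟨0, h⟩ : Fin n) = {⟨0, h⟩} := by
        rw [← Finset.Iio_insert, hIio0 h]; rfl
      rw [this]
      simp [hgk, this, hIio0 h, hnorm]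
    | succ m ih =>
      intro h
      have hm : m < n := by omega
      have hstep : Finset.Iic (⟨m + 1, h⟩ : Fin n)
          = insert (⟨m + 1, h⟩ : Fin n) (Finset.Iic (⟨m, hm⟩ : Fin n)) := by
        rw [← Finset.Iio_insert, hIioSucc m h]
      have hnotmem : (⟨m + 1, h⟩ : Fin n) ∉ Finset.Iic (⟨m, hm⟩ : Fin n) := by
        simp [Fin.le_def]
      rw [hstep, Finset.sum_insert hnotmem, ih hm, hgk, hIioSucc m h, ← hstep]
      ring
  have hgre' : ∀ l : Fin n, ∑ k ∈ Finset.Iic l, greedyVec f π (π k)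
      = f ((Finset.Iic l).image π) := fun l => hgre l.val l.isLt
  have hxle : ∀ l : Fin n, ∑ k ∈ Finset.Iic l, x (π k)
      ≤ ∑ k ∈ Finset.Iic l, greedyVec f π (π k) := by
    intro l
    rw [hgre' l]
    calc ∑ k ∈ Finset.Iic l, x (π k) = ∑ i ∈ (Finset.Iic l).image π, x i :=
          (Finset.sum_image (by intro a _ b _ h; exact π.injective h)).symm
      _ ≤ f _ := hxf _
  have habel : ∀ y : Fin n → ℝ,
      ∑ i, c i * y i = ∑ l : Fin n, d l * ∑ k ∈ Finset.Iic l, y (π k) := by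
    intro y
    have h1 : ∑ i, c i * y i = ∑ k : Fin n, c (π k) * y (π k) :=
      (Equiv.sum_comp π (fun i => c i * y i)).symm
    have h2 : ∀ k : Fin n, c (π k) * y (π k) = ∑ l ∈ Finset.Ici k, d l * y (π k) := by
      intro k
      rw [← Finset.sum_mul, htel k]
    have h3 : (∑ k : Fin n, ∑ l ∈ Finset.Ici k, d l * y (π k))
        = ∑ l : Fin n, ∑ k ∈ Finset.Iic l, d l * y (π k) :=
      Finset.sum_comm' (by intro k l; simp)
    rw [h1]
    simp_rw [h2]
    rw [h3]
    simp_rw [Finset.mul_sum]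
  rw [habel x, habel (greedyVec f π)]
  apply Finset.sum_le_sum
  intro l _
  exact mul_le_mul_of_nonneg_left (hxle l) (hdnn l)
end

section
/- Let E be partitioned into disjoint groups G_1, ..., G_m with G^{(i)} = G_1 ∪ ... ∪ G_i and G^{(0)} = ∅. Suppose a vector x ≥ 0 satisfies x(A) ≤ f(G^{(i-1)} ∪ A) - f(G^{(i-1)}) for every i and every A ⊆ G_i, where f is normalized, increasing and submodular. Then x(A) ≤ f(A) for every A ⊆ E. -/
open Finset

/-- `cumUnion G j = G_1 ∪ ⋯ ∪ G_j` (0-indexed: union of `G 0, …, G (j-1)`). -/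
def cumUnion {n : ℕ} (G : ℕ → Finset (Fin n)) (j : ℕ) : Finset (Fin n) :=
  (Finset.range j).biUnion G

theorem grouping_feasibility {n m : ℕ} (f : Finset (Fin n) → ℝ)
    (hnorm : f ∅ = 0)
    (hmono : ∀ A B : Finset (Fin n), A ⊆ B → f A ≤ f B)
    (hsub : Submodular f)
    (G : ℕ → Finset (Fin n))
    (hpart : (Finset.range m).biUnion G = Finset.univ)
    (hdisj : ∀ j < m, ∀ j' < m, j ≠ j' → Disjoint (G j) (G j'))
    (x : Fin n → ℝ) (hx : ∀ i, 0 ≤ x i)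
    (hgrp : ∀ j < m, ∀ A ⊆ G j,
      ∑ i ∈ A, x i ≤ f (cumUnion G j ∪ A) - f (cumUnion G j)) :
    ∀ A : Finset (Fin n), ∑ i ∈ A, x i ≤ f A := by
  intro A
  classical
  set B : ℕ → Finset (Fin n) := fun j => A ∩ cumUnion G j with hB
  have hcum_succ : ∀ j, cumUnion G (j + 1) = cumUnion G j ∪ G j := by
    intro j
    simp [cumUnion, Finset.range_add_one, Finset.biUnion_insert, Finset.union_comm]
  have hBsucc : ∀ j, B (j + 1) = B j ∪ (A ∩ G j) := by
    intro j
    simp only [hB, hcum_succ, Finset.inter_union_distrib_left]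
  have hdisjC : ∀ j < m, Disjoint (A ∩ G j) (cumUnion G j) := by
    intro j hj
    refine Finset.disjoint_left.mpr ?_
    intro i hi hicum
    simp only [cumUnion, Finset.mem_biUnion, Finset.mem_range] at hicum
    obtain ⟨j', hj', hij'⟩ := hicum
    exact Finset.disjoint_left.mp
      (hdisj j hj j' (hj'.trans hj) (Nat.ne_of_gt hj'))
      (Finset.mem_of_mem_inter_right hi) hij'
  have hsplit : A = (Finset.range m).biUnion (fun j => A ∩ G j) := by
    ext i
    constructor
    · intro hiA
      have : i ∈ (Finset.range m).biUnion G := by rw [hpart]; exact Finset.mem_univ i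
      simp only [Finset.mem_biUnion] at this ⊢
      obtain ⟨j, hj, hij⟩ := this
      exact ⟨j, hj, Finset.mem_inter.mpr ⟨hiA, hij⟩⟩
    · intro hi
      simp only [Finset.mem_biUnion] at hi
      obtain ⟨j, _, hij⟩ := hi
      exact Finset.mem_of_mem_inter_left hij
  have hsum : ∑ i ∈ A, x i = ∑ j ∈ Finset.range m, ∑ i ∈ A ∩ G j, x i := by
    have hpw : Set.PairwiseDisjoint ((Finset.range m : Finset ℕ) : Set ℕ) (fun j : ℕ => A ∩ G j) := by
      intro j hj j' hj' hne
      simp only [Finset.coe_range, Set.mem_Iio] at hj hj'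
      exact (hdisj j hj j' hj' hne).mono Finset.inter_subset_right
        Finset.inter_subset_right
    conv_lhs => rw [hsplit]
    exact Finset.sum_biUnion (f := x) hpw
  have hstep : ∀ j < m, ∑ i ∈ A ∩ G j, x i ≤ f (B (j + 1)) - f (B j) := by
    intro j hj
    have h1 : ∑ i ∈ A ∩ G j, x i ≤
        f (cumUnion G j ∪ (A ∩ G j)) - f (cumUnion G j) :=
      hgrp j hj (A ∩ G j) Finset.inter_subset_right
    have hBsub : B j ⊆ cumUnion G j := Finset.inter_subset_right
    have h2 := hsub (cumUnion G j) (B j ∪ (A ∩ G j))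
    have hU : cumUnion G j ∪ (B j ∪ (A ∩ G j)) = cumUnion G j ∪ (A ∩ G j) := by
      rw [← Finset.union_assoc, Finset.union_eq_left.mpr hBsub]
    have hI : cumUnion G j ∩ (B j ∪ (A ∩ G j)) = B j := by
      rw [Finset.inter_union_distrib_left,
        Finset.inter_eq_right.mpr hBsub,
        Finset.inter_comm,
        Finset.disjoint_iff_inter_eq_empty.mp (hdisjC j hj), Finset.union_empty]
    rw [hU, hI, ← hBsucc] at h2
    linarith
  have htel : ∑ j ∈ Finset.range m, (f (B (j + 1)) - f (B j)) = f (B m) - f (B 0) :=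
    Finset.sum_range_sub (fun j => f (B j)) m
  have hBm : B m = A := by
    simp [hB, cumUnion, hpart]
  have hB0 : B 0 = ∅ := by simp [hB, cumUnion]
  calc ∑ i ∈ A, x i = ∑ j ∈ Finset.range m, ∑ i ∈ A ∩ G j, x i := hsum
    _ ≤ ∑ j ∈ Finset.range m, (f (B (j + 1)) - f (B j)) := by
        refine Finset.sum_le_sum ?_
        intro j hj
        exact hstep j (Finset.mem_range.mp hj)
    _ = f (B m) - f (B 0) := htel
    _ = f A := by rw [hBm, hB0, hnorm, sub_zero]
end

section
/- Consider the LP max ∑_{i∈E} c_i x_i over P'(f) = {x : x(A) ≤ f(A) ∀ A ⊆ E, x_i ≥ d_i ∀ i}, with c_1 ≥ c_2 ≥ ... ≥ c_n > 0. Suppose E is partitioned into groups G_1,...,G_m, each with a lead index ℓ_j and nonlead set G_j^S, such that ℓ_j ≤ ℓ_{j+1}, ℓ_j ≤ k for all k ∈ G_j^S; define x by x_k = d_k for nonlead k and x_{ℓ_j} = f(G^{(j)}) - f(G^{(j-1)}) - d(G_j^S). If x is feasible for P'(f), then x is optimal, and its objective value equals ∑_{j=1}^m (c_{ℓ_j}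 - c_{ℓ_{j+1}}) f(G^{(j)}) - ∑_{j=1}^m ∑_{k∈G_j^S} (c_{ℓ_j} - c_k) d_k, where c_{ℓ_{m+1}} := 0. -/
open Finset

private lemma abel_helper (a T : ℕ → ℝ) (m : ℕ) (h0 : T 0 = 0) (hm : a m = 0) :
    ∑ j ∈ Finset.range m, a j * (T (j + 1) - T j)
      = ∑ j ∈ Finset.range m, (a j - a (j + 1)) * T (j + 1) := by
  rw [← sub_eq_zero, ← Finset.sum_sub_distrib]
  have h : ∀ j ∈ Finset.range m,
      a j * (T (j + 1) - T j) - (a j - a (j + 1)) * T (j + 1)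
        = a (j + 1) * T (j + 1) - a j * T j := fun j _ => by ring
  rw [Finset.sum_congr rfl h, Finset.sum_range_sub (fun j => a j * T j), hm, h0]
  ring

theorem grouping_optimality {n m : ℕ} (f : Finset (Fin n) → ℝ)
    (hnorm : f ∅ = 0)
    (hmono : ∀ A B : Finset (Fin n), A ⊆ B → f A ≤ f B)
    (hsub : Submodular f)
    (d : Fin n → ℝ) (hd : ∀ i, 0 ≤ d i)
    (c : Fin n → ℝ)
    (hcdec : ∀ i j : Fin n, i ≤ j → c j ≤ c i)
    (hcpos : ∀ i, 0 < c i)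
    (G : ℕ → Finset (Fin n)) (ℓ : ℕ → Fin n)
    (hpart : (Finset.range m).biUnion G = Finset.univ)
    (hdisj : ∀ j < m, ∀ j' < m, j ≠ j' → Disjoint (G j) (G j'))
    (hlead : ∀ j < m, ℓ j ∈ G j)
    (hlmono : ∀ j, j + 1 < m → ℓ j ≤ ℓ (j + 1))
    (hlmin : ∀ j < m, ∀ k ∈ G j \ {ℓ j}, ℓ j ≤ k)
    (x : Fin n → ℝ)
    (hxnonlead : ∀ j < m, ∀ k ∈ G j \ {ℓ j}, x k = d k)
    (hxlead : ∀ j < m,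
      x (ℓ j) = f (cumUnion G (j + 1)) - f (cumUnion G j) - ∑ k ∈ G j \ {ℓ j}, d k)
    (hxfeas : (∀ A : Finset (Fin n), ∑ i ∈ A, x i ≤ f A) ∧ ∀ i, d i ≤ x i) :
    (∀ y : Fin n → ℝ, (∀ A : Finset (Fin n), ∑ i ∈ A, y i ≤ f A) → (∀ i, d i ≤ y i) →
        ∑ i, c i * y i ≤ ∑ i, c i * x i) ∧
      ∑ i, c i * x i =
        ∑ j ∈ Finset.range m,
            ((if j < m then c (ℓ j) else 0) - (if j + 1 < m then c (ℓ (j + 1)) else 0)) *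
              f (cumUnion G (j + 1)) -
          ∑ j ∈ Finset.range m, ∑ k ∈ G j \ {ℓ j}, (c (ℓ j) - c k) * d k := by
  have hpd : (↑(Finset.range m) : Set ℕ).PairwiseDisjoint G := by
    intro j hj j' hj' hne
    exact hdisj j (Finset.mem_range.mp hj) j' (Finset.mem_range.mp hj') hne
  have hcum0 : cumUnion G 0 = ∅ := by simp [cumUnion]
  have hcumsucc : ∀ j, cumUnion G (j + 1) = G j ∪ cumUnion G j := by
    intro j; simp [cumUnion, Finset.range_add_one, Finset.biUnion_insert]
  have hdisjcum : ∀ j < m, Disjoint (G j) (cumUnion G j) := by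
    intro j hj
    rw [cumUnion, Finset.disjoint_biUnion_right]
    intro i hi
    have hij : i < j := Finset.mem_range.mp hi
    exact hdisj j hj i (hij.trans hj) (by omega)
  have hTsucc : ∀ (y : Fin n → ℝ), ∀ j < m,
      ∑ k ∈ cumUnion G (j + 1), y k = ∑ k ∈ G j, y k + ∑ k ∈ cumUnion G j, y k := by
    intro y j hj
    rw [hcumsucc, Finset.sum_union (hdisjcum j hj)]
  have key : ∀ y : Fin n → ℝ,
      ∑ i, c i * y i
        = ∑ j ∈ Finset.range m,
            ((if j < m then c (ℓ j) else 0) - (if j + 1 < m then c (ℓ (j + 1)) else 0)) *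
              (∑ k ∈ cumUnion G (j + 1), y k)
          - ∑ j ∈ Finset.range m, ∑ k ∈ G j \ {ℓ j}, (c (ℓ j) - c k) * y k := by
    intro y
    have step1 : ∑ i, c i * y i = ∑ j ∈ Finset.range m, ∑ k ∈ G j, c k * y k := by
      rw [← hpart, Finset.sum_biUnion hpd]
    have step2 : ∀ j ∈ Finset.range m,
        ∑ k ∈ G j, c k * y k
          = c (ℓ j) * (∑ k ∈ G j, y k) - ∑ k ∈ G j \ {ℓ j}, (c (ℓ j) - c k) * y k := by
      intro j hj
      have hl := hlead j (Finset.mem_range.mp hj)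
      rw [← Finset.erase_eq,
          ← Finset.add_sum_erase _ (fun k => c k * y k) hl,
          ← Finset.add_sum_erase _ y hl,
          mul_add, add_sub_assoc, Finset.mul_sum, ← Finset.sum_sub_distrib]
      congr 1
      exact Finset.sum_congr rfl fun k _ => by ring
    rw [step1, Finset.sum_congr rfl step2, Finset.sum_sub_distrib]
    congr 1
    have habel : ∑ j ∈ Finset.range m,
          (if j < m then c (ℓ j) else 0) *
            ((∑ k ∈ cumUnion G (j + 1), y k) - ∑ k ∈ cumUnion G j, y k)
        = ∑ j ∈ Finset.range m,
            ((if j < m then c (ℓ j) else 0) - (if j + 1 < m then c (ℓ (j + 1)) else 0)) *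
              ∑ k ∈ cumUnion G (j + 1), y k :=
      abel_helper (fun j => if j < m then c (ℓ j) else 0)
        (fun j => ∑ k ∈ cumUnion G j, y k) m (by simp [hcum0]) (by simp)
    rw [← habel]
    apply Finset.sum_congr rfl
    intro j hj
    have hjm := Finset.mem_range.mp hj
    rw [if_pos hjm, hTsucc y j hjm]
    ring
  have hTx : ∀ j ≤ m, ∑ k ∈ cumUnion G j, x k = f (cumUnion G j) := by
    intro j
    induction j with
    | zero => intro _; rw [hcum0]; simp [hnorm]
    | succ j ih =>
      intro hj
      have hjm : j < m := hj
      have hgx : ∑ k ∈ G j, x k = x (ℓ j) + ∑ k ∈ G j \ {ℓ j}, d k := by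
        rw [← Finset.add_sum_erase (G j) x (hlead j hjm)]
        congr 1
        rw [Finset.erase_eq]
        exact Finset.sum_congr rfl (hxnonlead j hjm)
      rw [hTsucc x j hjm, ih (le_of_lt hjm), hgx, hxlead j hjm]
      ring
  have hval : ∑ i, c i * x i =
      ∑ j ∈ Finset.range m,
          ((if j < m then c (ℓ j) else 0) - (if j + 1 < m then c (ℓ (j + 1)) else 0)) *
            f (cumUnion G (j + 1)) -
        ∑ j ∈ Finset.range m, ∑ k ∈ G j \ {ℓ j}, (c (ℓ j) - c k) * d k := by
    rw [key x]
    congr 1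
    · apply Finset.sum_congr rfl
      intro j hj
      rw [hTx (j + 1) (Finset.mem_range.mp hj)]
    · apply Finset.sum_congr rfl
      intro j hj
      exact Finset.sum_congr rfl fun k hk => by
        rw [hxnonlead j (Finset.mem_range.mp hj) k hk]
  refine ⟨?_, hval⟩
  intro y hyA hyd
  rw [hval, key y]
  apply sub_le_sub
  · apply Finset.sum_le_sum
    intro j hj
    have hjm := Finset.mem_range.mp hj
    have hcoef : 0 ≤ (if j < m then c (ℓ j) else 0) - (if j + 1 < m then c (ℓ (j + 1)) else 0) := by
      rw [if_pos hjm]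
      by_cases h : j + 1 < m
      · rw [if_pos h]
        have := hcdec (ℓ j) (ℓ (j + 1)) (hlmono j h)
        linarith
      · rw [if_neg h]
        have := hcpos (ℓ j)
        linarith
    exact mul_le_mul_of_nonneg_left (hyA _) hcoef
  · apply Finset.sum_le_sum
    intro j hj
    apply Finset.sum_le_sum
    intro k hk
    have hc : c k ≤ c (ℓ j) := hcdec _ _ (hlmin j (Finset.mem_range.mp hj) k hk)
    exact mul_le_mul_of_nonneg_left (hyd k) (by linarith)
end

section
/- In the dual LP min ∑_{A⊆E} y_A f(A) − ∑_{i∈E} d_i z_i subject to ∑_{A∋i} y_A − z_i ≥ c_i for all i and y, z ≥ 0, the assignment y_{G^{(j)}} = c_{ℓ_j} − c_{ℓ_{j+1}} (with c_{ℓ_{m+1}} = 0), z_k = c_{ℓ_j} − c_k for k ∈ G_j^S, and all other variables zero, is feasible whenever ℓ_j ≤ ℓ_{j+1} for all j and ℓ_j ≤ k for all k ∈ G_j^S, given c_1 ≥ c_2 ≥ ... ≥ c_n > 0. -/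
open Finset

lemma telescope_Ico (g : ℕ → ℝ) : ∀ b a : ℕ, a ≤ b →
    ∑ t ∈ Finset.Ico a b, (g t - g (t + 1)) = g a - g b := by
  intro b
  induction b with
  | zero => intro a ha; simp [Nat.le_zero.mp ha]
  | succ b ih =>
    intro a hab
    rcases Nat.lt_or_ge a (b + 1) with h | h
    · have hab' : a ≤ b := Nat.lt_succ_iff.mp h
      rw [Finset.sum_Ico_succ_top hab', ih a hab']
      ring
    · have : a = b + 1 := le_antisymm hab h
      simp [this]

theorem dual_assignment_feasible {n m : ℕ}
    (c : Fin n → ℝ)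
    (hcdec : ∀ i j : Fin n, i ≤ j → c j ≤ c i)
    (hcpos : ∀ i, 0 < c i)
    (G : ℕ → Finset (Fin n)) (ℓ : ℕ → Fin n)
    (hpart : (Finset.range m).biUnion G = Finset.univ)
    (hdisj : ∀ j < m, ∀ j' < m, j ≠ j' → Disjoint (G j) (G j'))
    (hne : ∀ j < m, (G j).Nonempty)
    (hlead : ∀ j < m, ℓ j ∈ G j)
    (hlmono : ∀ j, j + 1 < m → ℓ j ≤ ℓ (j + 1))
    (hlmin : ∀ j < m, ∀ k ∈ G j \ {ℓ j}, ℓ j ≤ k)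
    (y : Finset (Fin n) → ℝ) (z : Fin n → ℝ)
    (hy : ∀ j < m,
      y (cumUnion G (j + 1)) = c (ℓ j) - (if j + 1 < m then c (ℓ (j + 1)) else 0))
    (hy0 : ∀ A : Finset (Fin n), (∀ j < m, A ≠ cumUnion G (j + 1)) → y A = 0)
    (hz : ∀ j < m, ∀ k ∈ G j \ {ℓ j}, z k = c (ℓ j) - c k)
    (hz0 : ∀ j < m, z (ℓ j) = 0) :
    (∀ A : Finset (Fin n), 0 ≤ y A) ∧ (∀ i, 0 ≤ z i) ∧
      ∀ i : Fin n,
        c i ≤ (∑ A ∈ Finset.univ.filter (fun A : Finset (Fin n) => i ∈ A), y A) - z i := by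
  -- every element belongs to some group
  have hgrp : ∀ i : Fin n, ∃ j < m, i ∈ G j := by
    intro i
    have : i ∈ (Finset.range m).biUnion G := by rw [hpart]; exact Finset.mem_univ i
    obtain ⟨j, hj, hij⟩ := Finset.mem_biUnion.mp this
    exact ⟨j, Finset.mem_range.mp hj, hij⟩
  -- y is nonnegative
  have hyn : ∀ A, 0 ≤ y A := by
    intro A
    by_cases hA : ∀ j < m, A ≠ cumUnion G (j + 1)
    · rw [hy0 A hA]
    · push_neg at hA
      obtain ⟨j, hj, hAe⟩ := hA
      rw [hAe, hy j hj]
      split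
      · have := hcdec _ _ (hlmono j ‹_›); linarith
      · have := (hcpos (ℓ j)).le; linarith
  refine ⟨hyn, ?_, ?_⟩
  · -- z is nonnegative
    intro i
    obtain ⟨j, hj, hij⟩ := hgrp i
    by_cases hil : i = ℓ j
    · rw [hil, hz0 j hj]
    · have hmem : i ∈ G j \ {ℓ j} := by
        rw [Finset.mem_sdiff, Finset.mem_singleton]; exact ⟨hij, hil⟩
      rw [hz j hj i hmem]
      have := hcdec _ _ (hlmin j hj i hmem)
      linarith
  · intro i
    obtain ⟨j, hj, hij⟩ := hgrp i
    -- membership characterization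
    have hmem : ∀ j' < m, (i ∈ cumUnion G (j' + 1) ↔ j ≤ j') := by
      intro j' hj'
      constructor
      · intro h
        obtain ⟨t, ht, hit⟩ := Finset.mem_biUnion.mp h
        rw [Finset.mem_range] at ht
        by_contra hc
        have htm : t < m := by omega
        have htj : t ≠ j := by omega
        exact (Finset.disjoint_left.mp (hdisj t htm j hj htj) hit) hij
      · intro h
        exact Finset.mem_biUnion.mpr ⟨j, Finset.mem_range.mpr (by omega), hij⟩
    -- injectivity of j ↦ cumUnion G (j+1)
    have haux : ∀ a b, a < b → b < m → cumUnion G (a + 1) ≠ cumUnion G (b + 1) := by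
      intro a b hab hbm heq
      obtain ⟨x, hx⟩ := hne b hbm
      have hxb : x ∈ cumUnion G (b + 1) :=
        Finset.mem_biUnion.mpr ⟨b, Finset.mem_range.mpr (by omega), hx⟩
      rw [← heq] at hxb
      obtain ⟨t, ht, hxt⟩ := Finset.mem_biUnion.mp hxb
      rw [Finset.mem_range] at ht
      have htb : t ≠ b := by omega
      exact (Finset.disjoint_left.mp (hdisj t (by omega) b hbm htb) hxt) hx
    set T : Finset ℕ := (Finset.range m).filter (fun j' => i ∈ cumUnion G (j' + 1)) with hTdef
    have hinj : ∀ a ∈ T, ∀ b ∈ T, cumUnion G (a + 1) = cumUnion G (b + 1) → a = b := by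
      intro a ha b hb heq
      have ham := Finset.mem_range.mp (Finset.mem_filter.mp ha).1
      have hbm := Finset.mem_range.mp (Finset.mem_filter.mp hb).1
      rcases lt_trichotomy a b with h | h | h
      · exact absurd heq (haux a b h hbm)
      · exact h
      · exact absurd heq.symm (haux b a h ham)
    have hT : Finset.Ico j m = T := by
      ext j'
      simp only [hTdef, Finset.mem_Ico, Finset.mem_filter, Finset.mem_range]
      constructor
      · rintro ⟨h1, h2⟩; exact ⟨h2, (hmem j' h2).mpr h1⟩
      · rintro ⟨h1, h2⟩; exact ⟨(hmem j' h1).mp h2, h1⟩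
    have himg : ∑ A ∈ T.image (fun j' => cumUnion G (j' + 1)), y A
        = ∑ j' ∈ T, y (cumUnion G (j' + 1)) := Finset.sum_image hinj
    have hsub : T.image (fun j' => cumUnion G (j' + 1))
        ⊆ Finset.univ.filter (fun A : Finset (Fin n) => i ∈ A) := by
      intro A hA
      obtain ⟨j', hj', hAe⟩ := Finset.mem_image.mp hA
      have := (Finset.mem_filter.mp (hT ▸ hj' : j' ∈ T)).2
      rw [Finset.mem_filter]
      exact ⟨Finset.mem_univ A, hAe ▸ (Finset.mem_filter.mp hj').2⟩
    have hzero : ∀ A ∈ Finset.univ.filter (fun A : Finset (Fin n) => i ∈ A),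
        A ∉ T.image (fun j' => cumUnion G (j' + 1)) → y A = 0 := by
      intro A hA hAn
      apply hy0
      intro j' hj' hAe
      apply hAn
      apply Finset.mem_image.mpr
      refine ⟨j', ?_, hAe.symm⟩
      rw [Finset.mem_filter, Finset.mem_range]
      have hiA := (Finset.mem_filter.mp hA).2
      exact ⟨hj', hAe ▸ hiA⟩
    have hsum : (∑ A ∈ Finset.univ.filter (fun A : Finset (Fin n) => i ∈ A), y A)
        = ∑ j' ∈ Finset.Ico j m, y (cumUnion G (j' + 1)) := by
      rw [← Finset.sum_subset hsub hzero, himg, hT]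
    -- telescoping
    set g : ℕ → ℝ := fun t => if t < m then c (ℓ t) else 0 with hgdef
    have hterm : ∀ j' ∈ Finset.Ico j m, y (cumUnion G (j' + 1)) = g j' - g (j' + 1) := by
      intro j' hj'
      obtain ⟨h1, h2⟩ := Finset.mem_Ico.mp hj'
      rw [hy j' h2, hgdef]
      simp only [h2, if_true]
    have htel : (∑ j' ∈ Finset.Ico j m, y (cumUnion G (j' + 1))) = c (ℓ j) := by
      rw [Finset.sum_congr rfl hterm, telescope_Ico g m j hj.le, hgdef]
      simp [hj]
    rw [hsum, htel]
    -- final comparison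
    by_cases hil : i = ℓ j
    · rw [hil, hz0 j hj]; simp
    · have hmem' : i ∈ G j \ {ℓ j} := by
        rw [Finset.mem_sdiff, Finset.mem_singleton]; exact ⟨hij, hil⟩
      rw [hz j hj i hmem']
      linarith
end
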